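/- Let P₁,…,P₄ ∈ ℝ², let J be the Jacobian determinant of the associated bilinear map, and let c₂, c₃, c₄ be the corner cross products. The vertex mode ψ̂_{1,1}(x̂,ŷ) = ( (ŷ+1)²(1−ŷ)(x̂+1)·(−(2c₄+c₃)x̂ + 2c₄+3c₃)/128 , (1−x̂)(ŷ+1)(x̂+1)²·((2c₂+c₃)ŷ − (2c₂+3c₃))/128 ) satisfies: (i) its second component vanishes whenever x̂ = ±1 and its first component vanishes whenever ŷ = ±1 (vanishing tangential trace on all four edges of [−1,1]²); (ii) ∇×ψ̂_{1,1}(1,ŷ) = J(1,ŷ)·(1+ŷ)/2 for all ŷ; (iii) ∇×ψ̂_{1,1}(x̂,1) = J(x̂,1)·(1+x̂)/2 for all x̂; (iv) ∇×ψ̂_{1,1}(−1,ŷ) = 0 for all ŷ and ∇×ψ̂_{1,1}(x̂,−1) = 0 for all x̂. -/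

import Mathlib

/-- Entry `B₁₁` of the Jacobian matrix of the bilinear map: `(x₂₁(1−ŷ) + x₃₄(1+ŷ))/4`. -/
noncomputable def B11 (x1 x2 x3 x4 yh : ℝ) : ℝ :=
  ((x2 - x1) * (1 - yh) + (x3 - x4) * (1 + yh)) / 4

/-- Entry `B₁₂`: `(x₄₁(1−x̂) + x₃₂(1+x̂))/4`. -/
noncomputable def B12 (x1 x2 x3 x4 xh : ℝ) : ℝ :=
  ((x4 - x1) * (1 - xh) + (x3 - x2) * (1 + xh)) / 4

/-- Entry `B₂₁`: `(y₂₁(1−ŷ) + y₃₄(1+ŷ))/4`. -/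
noncomputable def B21 (y1 y2 y3 y4 yh : ℝ) : ℝ :=
  ((y2 - y1) * (1 - yh) + (y3 - y4) * (1 + yh)) / 4

/-- Entry `B₂₂`: `(y₄₁(1−x̂) + y₃₂(1+x̂))/4`. -/
noncomputable def B22 (y1 y2 y3 y4 xh : ℝ) : ℝ :=
  ((y4 - y1) * (1 - xh) + (y3 - y2) * (1 + xh)) / 4

/-- The Jacobian determinant `J(x̂,ŷ) = det B(x̂,ŷ)` of the bilinear map. -/
noncomputable def Jdet (x1 x2 x3 x4 y1 y2 y3 y4 xh yh : ℝ) : ℝ :=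
  B11 x1 x2 x3 x4 yh * B22 y1 y2 y3 y4 xh - B12 x1 x2 x3 x4 xh * B21 y1 y2 y3 y4 yh

/-- Scalar curl of a planar vector field: `∇×u = ∂u₂/∂x̂ − ∂u₁/∂ŷ`. -/
noncomputable def scurl (u : ℝ × ℝ → ℝ × ℝ) (z : ℝ × ℝ) : ℝ :=
  deriv (fun t => (u (t, z.2)).2) z.1 - deriv (fun t => (u (z.1, t)).1) z.2

/-- Vertex mode `ψ̂_{0,0}` (corresponding to vertex `P₁`). -/
noncomputable def psi00 (x1 x2 x3 x4 y1 y2 y3 y4 : ℝ) (z : ℝ × ℝ) : ℝ × ℝ :=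
  let c1 := (x2 - x1) * (y4 - y1) - (y2 - y1) * (x4 - x1)
  let c2 := (x3 - x2) * (y1 - y2) - (y3 - y2) * (x1 - x2)
  let c4 := (x1 - x4) * (y3 - y4) - (y1 - y4) * (x3 - x4)
  ((z.2 - 1) ^ 2 * (1 + z.2) * (z.1 - 1) * ((c1 + 2 * c2) * z.1 + 3 * c1 + 2 * c2) / 128,
   -((1 + z.1) * (z.2 - 1) * (z.1 - 1) ^ 2 * ((c1 + 2 * c4) * z.2 + 3 * c1 + 2 * c4)) / 128)

/-- Vertex mode `ψ̂_{0,1}` (corresponding to vertex `P₂`). -/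
noncomputable def psi01 (x1 x2 x3 x4 y1 y2 y3 y4 : ℝ) (z : ℝ × ℝ) : ℝ × ℝ :=
  let c1 := (x2 - x1) * (y4 - y1) - (y2 - y1) * (x4 - x1)
  let c2 := (x3 - x2) * (y1 - y2) - (y3 - y2) * (x1 - x2)
  let c3 := (x4 - x3) * (y2 - y3) - (y4 - y3) * (x2 - x3)
  ((z.2 - 1) ^ 2 * (1 + z.2) * (z.1 + 1) * ((2 * c1 + c2) * z.1 - (2 * c1 + 3 * c2)) / 128,
   (1 - z.1) * (z.2 - 1) * (1 + z.1) ^ 2 * ((c2 + 2 * c3) * z.2 + 3 * c2 + 2 * c3) / 128)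

/-- Vertex mode `ψ̂_{1,1}` (corresponding to vertex `P₃`). -/
noncomputable def psi11 (x1 x2 x3 x4 y1 y2 y3 y4 : ℝ) (z : ℝ × ℝ) : ℝ × ℝ :=
  let c2 := (x3 - x2) * (y1 - y2) - (y3 - y2) * (x1 - x2)
  let c3 := (x4 - x3) * (y2 - y3) - (y4 - y3) * (x2 - x3)
  let c4 := (x1 - x4) * (y3 - y4) - (y1 - y4) * (x3 - x4)
  ((z.2 + 1) ^ 2 * (1 - z.2) * (z.1 + 1) * (-(2 * c4 + c3) * z.1 + 2 * c4 + 3 * c3) / 128,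
   (1 - z.1) * (z.2 + 1) * (z.1 + 1) ^ 2 * ((2 * c2 + c3) * z.2 - (2 * c2 + 3 * c3)) / 128)

/-- Vertex mode `ψ̂_{1,0}` (corresponding to vertex `P₄`). -/
noncomputable def psi10 (x1 x2 x3 x4 y1 y2 y3 y4 : ℝ) (z : ℝ × ℝ) : ℝ × ℝ :=
  let c1 := (x2 - x1) * (y4 - y1) - (y2 - y1) * (x4 - x1)
  let c3 := (x4 - x3) * (y2 - y3) - (y4 - y3) * (x2 - x3)
  let c4 := (x1 - x4) * (y3 - y4) - (y1 - y4) * (x3 - x4)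
  ((z.2 + 1) ^ 2 * (1 - z.2) * (z.1 - 1) * (-(c4 + 2 * c3) * z.1 - (3 * c4 + 2 * c3)) / 128,
   (1 + z.1) * (z.2 + 1) * (z.1 - 1) ^ 2 * (-(2 * c1 + c4) * z.2 + 2 * c1 + 3 * c4) / 128)


lemma dA11 (c e : ℝ) (t : ℝ) :
    deriv (fun s => (1 - s) * c * (s + 1) ^ 2 * e / 128) t
      = ((-c) * (t + 1) ^ 2 + (1 - t) * c * (2 * (t + 1))) * e / 128 := by
  have h1 : HasDerivAt (fun s : ℝ => (1 - s) * c) (-1 * c) t :=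
    ((hasDerivAt_id t).const_sub 1).mul_const c
  have h2 : HasDerivAt (fun s : ℝ => (s + 1) ^ 2) (2 * (t + 1) ^ 1 * 1) t := by
    simpa using ((hasDerivAt_id t).add_const 1).fun_pow 2
  rw [(((h1.fun_mul h2).mul_const e).div_const 128).deriv]; ring

lemma dB11 (c e : ℝ) (t : ℝ) :
    deriv (fun s => (s + 1) ^ 2 * (1 - s) * c * e / 128) t
      = ((2 * (t + 1)) * (1 - t) - (t + 1) ^ 2) * c * e / 128 := by
  have h2 : HasDerivAt (fun s : ℝ => (s + 1) ^ 2) (2 * (t + 1) ^ 1 * 1) t := by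
    simpa using ((hasDerivAt_id t).add_const 1).fun_pow 2
  have h1 : HasDerivAt (fun s : ℝ => 1 - s) (-1) t := by
    simpa using (hasDerivAt_id t).const_sub 1
  rw [((((h2.fun_mul h1).mul_const c).mul_const e).div_const 128).deriv]; ring

lemma scurl11 (x1 x2 x3 x4 y1 y2 y3 y4 a b c2 c3 c4 : ℝ)
    (hc2 : c2 = (x3 - x2) * (y1 - y2) - (y3 - y2) * (x1 - x2))
    (hc3 : c3 = (x4 - x3) * (y2 - y3) - (y4 - y3) * (x2 - x3))
    (hc4 : c4 = (x1 - x4) * (y3 - y4) - (y1 - y4) * (x3 - x4)) :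
    scurl (psi11 x1 x2 x3 x4 y1 y2 y3 y4) (a, b) =
      ((-((b + 1)) * (a + 1) ^ 2 + (1 - a) * (b + 1) * (2 * (a + 1)))
          * ((2 * c2 + c3) * b - (2 * c2 + 3 * c3)) / 128
        - ((2 * (b + 1)) * (1 - b) - (b + 1) ^ 2)
          * ((a + 1) * (-(2 * c4 + c3) * a + 2 * c4 + 3 * c3)) / 128) := by
  subst hc2 hc3 hc4
  simp only [scurl, psi11]
  rw [dA11, dB11]; ring

/-- Trace properties of the vertex mode `ψ̂_{1,1}`:
(i) vanishing tangential trace on all four edges of `[−1,1]²`;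
(ii) `∇×ψ̂_{1,1}(1,ŷ) = J(1,ŷ)·(1+ŷ)/2`; (iii) `∇×ψ̂_{1,1}(x̂,1) = J(x̂,1)·(1+x̂)/2`;
(iv) `∇×ψ̂_{1,1}(−1,ŷ) = 0` and `∇×ψ̂_{1,1}(x̂,−1) = 0`. -/
theorem vertex_mode_P3_traces (x1 x2 x3 x4 y1 y2 y3 y4 : ℝ) :
    (∀ yh : ℝ, (psi11 x1 x2 x3 x4 y1 y2 y3 y4 (-1, yh)).2 = 0 ∧
      (psi11 x1 x2 x3 x4 y1 y2 y3 y4 (1, yh)).2 = 0) ∧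
    (∀ xh : ℝ, (psi11 x1 x2 x3 x4 y1 y2 y3 y4 (xh, -1)).1 = 0 ∧
      (psi11 x1 x2 x3 x4 y1 y2 y3 y4 (xh, 1)).1 = 0) ∧
    (∀ yh : ℝ, scurl (psi11 x1 x2 x3 x4 y1 y2 y3 y4) (1, yh) =
      Jdet x1 x2 x3 x4 y1 y2 y3 y4 1 yh * (1 + yh) / 2) ∧
    (∀ xh : ℝ, scurl (psi11 x1 x2 x3 x4 y1 y2 y3 y4) (xh, 1) =
      Jdet x1 x2 x3 x4 y1 y2 y3 y4 xh 1 * (1 + xh) / 2) ∧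
    (∀ yh : ℝ, scurl (psi11 x1 x2 x3 x4 y1 y2 y3 y4) (-1, yh) = 0) ∧
    (∀ xh : ℝ, scurl (psi11 x1 x2 x3 x4 y1 y2 y3 y4) (xh, -1) = 0) := by
  refine ⟨fun yh => ⟨by norm_num [psi11], by norm_num [psi11]⟩,
          fun xh => ⟨by norm_num [psi11], by norm_num [psi11]⟩,
          fun yh => ?_, fun xh => ?_, fun yh => ?_, fun xh => ?_⟩ <;>
    rw [scurl11 _ _ _ _ _ _ _ _ _ _ _ _ _ rfl rfl rfl] <;>
    first
    | (simp only [Jdet, B11, B12, B21, B22]; ring)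
    | ring
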